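/- If x ∈ GL₆(𝕂) satisfies: the lower right 2×4 corner block of x has rank 1 and the lower right 2×2 corner block of x has rank 1, then x·x_left does not belong to Lie(P)·x + x·Lie(P)^τ. -/
import Mathlib


open Matrix

/-- The Lie algebra of the parabolic `P ⊆ GL₆(𝕂)`: block upper triangular `6 × 6`
matrices with respect to the partition `(2,2,2)` of `6`. -/
def LieP (𝕂 : Type*) [RCLike 𝕂] : Set (Matrix (Fin 6) (Fin 6) 𝕂) :=
  {p | ∀ i j : Fin 6, (j : ℕ) / 2 < (i : ℕ) / 2 → p i j = 0}

/-- `Lie(P)^τ`, the image of `Lie(P)` under matrix transpose. -/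
def LiePtau (𝕂 : Type*) [RCLike 𝕂] : Set (Matrix (Fin 6) (Fin 6) 𝕂) :=
  {q | qᵀ ∈ LieP 𝕂}

/-- The block matrix `x_left = [[0,I₂,0],[0,0,I₂],[0,0,0]]` (2×2 blocks). -/
def xLeft (𝕂 : Type*) [RCLike 𝕂] : Matrix (Fin 6) (Fin 6) 𝕂 :=
  Matrix.of fun i j => if (j : ℕ) = (i : ℕ) + 2 then 1 else 0

/-- `x_right = x_left^τ`. -/
def xRight (𝕂 : Type*) [RCLike 𝕂] : Matrix (Fin 6) (Fin 6) 𝕂 := (xLeft 𝕂)ᵀ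

/-- The set `Lie(P)·x + x·Lie(P)^τ = {p·x + x·q : p ∈ Lie(P), q ∈ Lie(P)^τ}`. -/
def tanSet {𝕂 : Type*} [RCLike 𝕂] (x : Matrix (Fin 6) (Fin 6) 𝕂) :
    Set (Matrix (Fin 6) (Fin 6) 𝕂) :=
  {m | ∃ p ∈ LieP 𝕂, ∃ q ∈ LiePtau 𝕂, m = p * x + x * q}

/-- The lower right `i × j` corner block of a `6 × 6` matrix. -/
def corner {𝕂 : Type*} [RCLike 𝕂] (i j : ℕ) (hi : i ≤ 6) (hj : j ≤ 6)
    (x : Matrix (Fin 6) (Fin 6) 𝕂) : Matrix (Fin i) (Fin j) 𝕂 :=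
  Matrix.of fun a b =>
    x ⟨6 - i + a.1, by have := a.2; omega⟩ ⟨6 - j + b.1, by have := b.2; omega⟩

/-- The rank matrix `R(x) = [[r₄ₓ₄(x), r₄ₓ₂(x)], [r₂ₓ₄(x), r₂ₓ₂(x)]]`, where
`r_{i×j}(x)` is the rank of the lower right `i × j` corner block of `x`. -/
noncomputable def rankMatrix {𝕂 : Type*} [RCLike 𝕂] (x : Matrix (Fin 6) (Fin 6) 𝕂) :
    Matrix (Fin 2) (Fin 2) ℕ :=
  !![(corner 4 4 (by norm_num) (by norm_num) x).rank,
     (corner 4 2 (by norm_num) (by norm_num) x).rank;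
     (corner 2 4 (by norm_num) (by norm_num) x).rank,
     (corner 2 2 (by norm_num) (by norm_num) x).rank]

private lemma aux_finrank_ker_one {𝕂 : Type*} [RCLike 𝕂] {n : ℕ}
    (M : Matrix (Fin 2) (Fin n) 𝕂) (h : M.rank = 1) :
    Module.finrank 𝕂 (LinearMap.ker (Matrix.mulVecLin Mᵀ)) = 1 := by
  have h1 := LinearMap.finrank_range_add_finrank_ker (Matrix.mulVecLin Mᵀ)
  have h2 : Module.finrank 𝕂 (LinearMap.range (Matrix.mulVecLin Mᵀ)) = 1 := by
    have : Mᵀ.rank = 1 := by rw [Matrix.rank_transpose, h]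
    exact this
  rw [h2, Module.finrank_fin_fun] at h1
  omega

/-- If `x ∈ GL₆(𝕂)` has lower right `2 × 4` corner block of rank `1` and lower right
`2 × 2` corner block of rank `1`, then `x·x_left ∉ Lie(P)·x + x·Lie(P)^τ`. -/
theorem xLeft_transversal_of_second_row_one_one {𝕂 : Type*} [RCLike 𝕂]
    (x : Matrix (Fin 6) (Fin 6) 𝕂) (hx : IsUnit x.det)
    (h24 : (corner 2 4 (by norm_num) (by norm_num) x).rank = 1)
    (h22 : (corner 2 2 (by norm_num) (by norm_num) x).rank = 1) :
    x * xLeft 𝕂 ∉ tanSet x := by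
  rintro ⟨p, hp, q, hq, heq⟩
  have hp' : ∀ i j : Fin 6, (j : ℕ) / 2 < (i : ℕ) / 2 → p i j = 0 := hp
  have hqt : ∀ i j : Fin 6, (j : ℕ) / 2 < (i : ℕ) / 2 → qᵀ i j = 0 := hq
  have hq' : ∀ i j : Fin 6, (i : ℕ) / 2 < (j : ℕ) / 2 → q i j = 0 := fun i j h => hqt j i h
  set M24 : Matrix (Fin 2) (Fin 4) 𝕂 := corner 2 4 (by norm_num) (by norm_num) x with hM24def
  set M22 : Matrix (Fin 2) (Fin 2) 𝕂 := corner 2 2 (by norm_num) (by norm_num) x with hM22def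
  have h24' : M24.rank = 1 := h24
  have h22' : M22.rank = 1 := h22
  -- pick v ≠ 0 in the left kernel of M24
  have hk24 : Module.finrank 𝕂 (LinearMap.ker (Matrix.mulVecLin M24ᵀ)) = 1 :=
    aux_finrank_ker_one M24 h24'
  have hne : LinearMap.ker (Matrix.mulVecLin M24ᵀ) ≠ ⊥ := by
    intro hbot
    rw [hbot, finrank_bot] at hk24
    exact one_ne_zero hk24.symm
  obtain ⟨v, hvmem, hvne⟩ := Submodule.exists_mem_ne_zero_of_ne_bot hne
  have hv : M24ᵀ *ᵥ v = 0 := LinearMap.mem_ker.mp hvmem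
  -- scalar consequences: v kills columns 2..5 of the bottom two rows of x
  have ev : ∀ b : Fin 4, M24 0 b * v 0 + M24 1 b * v 1 = 0 := by
    intro b
    have h0 := congrFun hv b
    simpa [Matrix.mulVec, dotProduct, Fin.sum_univ_two] using h0
  have c200 : M24 0 0 = x 4 2 := rfl
  have c201 : M24 0 1 = x 4 3 := rfl
  have c202 : M24 0 2 = x 4 4 := rfl
  have c203 : M24 0 3 = x 4 5 := rfl
  have c210 : M24 1 0 = x 5 2 := rfl
  have c211 : M24 1 1 = x 5 3 := rfl
  have c212 : M24 1 2 = x 5 4 := rfl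
  have c213 : M24 1 3 = x 5 5 := rfl
  have e2 : x 4 2 * v 0 + x 5 2 * v 1 = 0 := by rw [← c200, ← c210]; exact ev 0
  have e3 : x 4 3 * v 0 + x 5 3 * v 1 = 0 := by rw [← c201, ← c211]; exact ev 1
  have e4 : x 4 4 * v 0 + x 5 4 * v 1 = 0 := by rw [← c202, ← c212]; exact ev 2
  have e5 : x 4 5 * v 0 + x 5 5 * v 1 = 0 := by rw [← c203, ← c213]; exact ev 3
  -- zero entries of p and q
  have hp40 : p 4 0 = 0 := hp' 4 0 (by decide)
  have hp41 : p 4 1 = 0 := hp' 4 1 (by decide)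
  have hp42 : p 4 2 = 0 := hp' 4 2 (by decide)
  have hp43 : p 4 3 = 0 := hp' 4 3 (by decide)
  have hp50 : p 5 0 = 0 := hp' 5 0 (by decide)
  have hp51 : p 5 1 = 0 := hp' 5 1 (by decide)
  have hp52 : p 5 2 = 0 := hp' 5 2 (by decide)
  have hp53 : p 5 3 = 0 := hp' 5 3 (by decide)
  have hq02 : q 0 2 = 0 := hq' 0 2 (by decide)
  have hq12 : q 1 2 = 0 := hq' 1 2 (by decide)
  have hq03 : q 0 3 = 0 := hq' 0 3 (by decide)
  have hq13 : q 1 3 = 0 := hq' 1 3 (by decide)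
  have hq04 : q 0 4 = 0 := hq' 0 4 (by decide)
  have hq14 : q 1 4 = 0 := hq' 1 4 (by decide)
  have hq24 : q 2 4 = 0 := hq' 2 4 (by decide)
  have hq34 : q 3 4 = 0 := hq' 3 4 (by decide)
  have hq05 : q 0 5 = 0 := hq' 0 5 (by decide)
  have hq15 : q 1 5 = 0 := hq' 1 5 (by decide)
  have hq25 : q 2 5 = 0 := hq' 2 5 (by decide)
  have hq35 : q 3 5 = 0 := hq' 3 5 (by decide)
  -- entrywise consequences of heq at rows 4,5 and columns 2..5
  have E : ∀ i j : Fin 6, (x * xLeft 𝕂) i j = (p * x) i j + (x * q) i j := by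
    intro i j; rw [heq]; rfl

  have E42 : x 4 0 = p 4 4 * x 4 2 + p 4 5 * x 5 2 + (x 4 2 * q 2 2 + x 4 3 * q 3 2 + x 4 4 * q 4 2 + x 4 5 * q 5 2) := by
    have h0 := E 4 2
    simp +decide [Matrix.mul_apply, Fin.sum_univ_six, xLeft,
      hp40, hp41, hp42, hp43, hq02, hq12] at h0
    linear_combination h0
  have E52 : x 5 0 = p 5 4 * x 4 2 + p 5 5 * x 5 2 + (x 5 2 * q 2 2 + x 5 3 * q 3 2 + x 5 4 * q 4 2 + x 5 5 * q 5 2) := by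
    have h0 := E 5 2
    simp +decide [Matrix.mul_apply, Fin.sum_univ_six, xLeft,
      hp50, hp51, hp52, hp53, hq02, hq12] at h0
    linear_combination h0
  have E43 : x 4 1 = p 4 4 * x 4 3 + p 4 5 * x 5 3 + (x 4 2 * q 2 3 + x 4 3 * q 3 3 + x 4 4 * q 4 3 + x 4 5 * q 5 3) := by
    have h0 := E 4 3
    simp +decide [Matrix.mul_apply, Fin.sum_univ_six, xLeft,
      hp40, hp41, hp42, hp43, hq03, hq13] at h0
    linear_combination h0
  have E53 : x 5 1 = p 5 4 * x 4 3 + p 5 5 * x 5 3 + (x 5 2 * q 2 3 + x 5 3 * q 3 3 + x 5 4 * q 4 3 + x 5 5 * q 5 3) := by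
    have h0 := E 5 3
    simp +decide [Matrix.mul_apply, Fin.sum_univ_six, xLeft,
      hp50, hp51, hp52, hp53, hq03, hq13] at h0
    linear_combination h0
  have E44 : x 4 2 = p 4 4 * x 4 4 + p 4 5 * x 5 4 + (x 4 4 * q 4 4 + x 4 5 * q 5 4) := by
    have h0 := E 4 4
    simp +decide [Matrix.mul_apply, Fin.sum_univ_six, xLeft,
      hp40, hp41, hp42, hp43, hq04, hq14, hq24, hq34] at h0
    linear_combination h0
  have E54 : x 5 2 = p 5 4 * x 4 4 + p 5 5 * x 5 4 + (x 5 4 * q 4 4 + x 5 5 * q 5 4) := by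
    have h0 := E 5 4
    simp +decide [Matrix.mul_apply, Fin.sum_univ_six, xLeft,
      hp50, hp51, hp52, hp53, hq04, hq14, hq24, hq34] at h0
    linear_combination h0
  have E45 : x 4 3 = p 4 4 * x 4 5 + p 4 5 * x 5 5 + (x 4 4 * q 4 5 + x 4 5 * q 5 5) := by
    have h0 := E 4 5
    simp +decide [Matrix.mul_apply, Fin.sum_univ_six, xLeft,
      hp40, hp41, hp42, hp43, hq05, hq15, hq25, hq35] at h0
    linear_combination h0
  have E55 : x 5 3 = p 5 4 * x 4 5 + p 5 5 * x 5 5 + (x 5 4 * q 4 5 + x 5 5 * q 5 5) := by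
    have h0 := E 5 5
    simp +decide [Matrix.mul_apply, Fin.sum_univ_six, xLeft,
      hp50, hp51, hp52, hp53, hq05, hq15, hq25, hq35] at h0
    linear_combination h0
  -- row-vector w = v ᵥ* p₃₃ kills M22
  have f4 : x 4 4 * (v 0 * p 4 4 + v 1 * p 5 4) + x 5 4 * (v 0 * p 4 5 + v 1 * p 5 5) = 0 := by
    linear_combination (-(v 0)) * E44 - v 1 * E54 + e2 - q 4 4 * e4 - q 5 4 * e5
  have f5 : x 4 5 * (v 0 * p 4 4 + v 1 * p 5 4) + x 5 5 * (v 0 * p 4 5 + v 1 * p 5 5) = 0 := by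
    linear_combination (-(v 0)) * E45 - v 1 * E55 + e3 - q 4 5 * e4 - q 5 5 * e5
  have c2200 : M22 0 0 = x 4 4 := rfl
  have c2201 : M22 0 1 = x 4 5 := rfl
  have c2210 : M22 1 0 = x 5 4 := rfl
  have c2211 : M22 1 1 = x 5 5 := rfl
  have hvK : v ∈ LinearMap.ker (Matrix.mulVecLin M22ᵀ) := by
    rw [LinearMap.mem_ker]
    show M22ᵀ *ᵥ v = 0
    funext b
    fin_cases b
    · simp [Matrix.mulVec, dotProduct, Fin.sum_univ_two, Matrix.transpose_apply,
        c2200, c2210]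
      linear_combination e4
    · simp [Matrix.mulVec, dotProduct, Fin.sum_univ_two, Matrix.transpose_apply,
        c2201, c2211]
      linear_combination e5
  set w : Fin 2 → 𝕂 := ![v 0 * p 4 4 + v 1 * p 5 4, v 0 * p 4 5 + v 1 * p 5 5] with hwdef
  have hwK : w ∈ LinearMap.ker (Matrix.mulVecLin M22ᵀ) := by
    rw [LinearMap.mem_ker]
    show M22ᵀ *ᵥ w = 0
    funext b
    fin_cases b
    · simp [hwdef, Matrix.mulVec, dotProduct, Fin.sum_univ_two, Matrix.transpose_apply,
        c2200, c2210]
      linear_combination f4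
    · simp [hwdef, Matrix.mulVec, dotProduct, Fin.sum_univ_two, Matrix.transpose_apply,
        c2201, c2211]
      linear_combination f5
  have hk22 : Module.finrank 𝕂 (LinearMap.ker (Matrix.mulVecLin M22ᵀ)) = 1 :=
    aux_finrank_ker_one M22 h22'
  obtain ⟨c, hc⟩ :=
    (finrank_eq_one_iff_of_nonzero'
      (⟨v, hvK⟩ : LinearMap.ker (Matrix.mulVecLin M22ᵀ))
      (by simpa [ne_eq, Submodule.mk_eq_zero] using hvne)).mp hk22 ⟨w, hwK⟩
  have hc' : c • v = w := congrArg Subtype.val hc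
  have hc0 : c * v 0 = v 0 * p 4 4 + v 1 * p 5 4 := by
    have h0 := congrFun hc' 0
    simpa [hwdef] using h0
  have hc1 : c * v 1 = v 0 * p 4 5 + v 1 * p 5 5 := by
    have h0 := congrFun hc' 1
    simpa [hwdef] using h0
  -- now v kills columns 0,1 as well
  have e0 : x 4 0 * v 0 + x 5 0 * v 1 = 0 := by
    linear_combination v 0 * E42 + v 1 * E52 + q 2 2 * e2 + q 3 2 * e3 + q 4 2 * e4
      + q 5 2 * e5 - x 4 2 * hc0 - x 5 2 * hc1 + c * e2
  have e1 : x 4 1 * v 0 + x 5 1 * v 1 = 0 := by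
    linear_combination v 0 * E43 + v 1 * E53 + q 2 3 * e2 + q 3 3 * e3 + q 4 3 * e4
      + q 5 3 * e5 - x 4 3 * hc0 - x 5 3 * hc1 + c * e3
  -- contradiction with invertibility of x
  set v6 : Fin 6 → 𝕂 := ![0, 0, 0, 0, v 0, v 1] with hv6def
  have hv64 : v6 4 = v 0 := rfl
  have hv65 : v6 5 = v 1 := rfl
  have hvx : v6 ᵥ* x = 0 := by
    funext j
    fin_cases j
    · simp [hv6def, Matrix.vecMul, dotProduct, Fin.sum_univ_six, show (![0, 0, 0, 0, v 0, v 1] : Fin 6 → 𝕂) 5 = v 1 from rfl]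
      linear_combination e0
    · simp [hv6def, Matrix.vecMul, dotProduct, Fin.sum_univ_six, show (![0, 0, 0, 0, v 0, v 1] : Fin 6 → 𝕂) 5 = v 1 from rfl]
      linear_combination e1
    · simp [hv6def, Matrix.vecMul, dotProduct, Fin.sum_univ_six, show (![0, 0, 0, 0, v 0, v 1] : Fin 6 → 𝕂) 5 = v 1 from rfl]
      linear_combination e2
    · simp [hv6def, Matrix.vecMul, dotProduct, Fin.sum_univ_six, show (![0, 0, 0, 0, v 0, v 1] : Fin 6 → 𝕂) 5 = v 1 from rfl]
      linear_combination e3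
    · simp [hv6def, Matrix.vecMul, dotProduct, Fin.sum_univ_six, show (![0, 0, 0, 0, v 0, v 1] : Fin 6 → 𝕂) 5 = v 1 from rfl]
      linear_combination e4
    · simp [hv6def, Matrix.vecMul, dotProduct, Fin.sum_univ_six, show (![0, 0, 0, 0, v 0, v 1] : Fin 6 → 𝕂) 5 = v 1 from rfl]
      linear_combination e5
  have hv6 : v6 = (v6 ᵥ* x) ᵥ* x⁻¹ := by
    rw [Matrix.vecMul_vecMul, Matrix.mul_nonsing_inv x hx, Matrix.vecMul_one]
  rw [hvx, Matrix.zero_vecMul] at hv6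
  apply hvne
  funext a
  fin_cases a
  · have h0 := congrFun hv6 4
    simpa [hv6def] using h0
  · have h0 := congrFun hv6 5
    simpa [hv6def] using h0
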